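/- For every real number β > 0, 2 · ∫₀¹ ∫₀¹ (2 − 2cos(2πs)) / ( 16β + 12 − (4β+2)·(2cos(2πt) + 2cos(2πs)) − 4·cos(2πt)·cos(2πs) ) dt ds = arccos(1/(2β+1)) / (2π·√(β² + β)). (This is the evaluation of the potential kernel α(β) between two adjacent degree-8 vertices of the tetrakis square lattice with edge weight β on the edges joining degree-8 vertices; note arccos(1/(2β+1)) = arcsec(2β+1).) -/

import Mathlib

open Real MeasureTheory intervalIntegral Set Filter Topology

lemma denom_pos (A B : ℝ) (hAB : |B| < A) (x : ℝ) : 0 < A - B * Real.cos x := by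
  have h1 := Real.neg_one_le_cos x
  have h2 := Real.cos_le_one x
  have := abs_lt.mp hAB
  rcases le_or_gt 0 B with hb | hb <;> nlinarith

lemma cont_denom (A B : ℝ) (hAB : |B| < A) :
    Continuous (fun t : ℝ => 1 / (A - B * Real.cos (2 * π * t))) := by
  apply Continuous.div continuous_const
  · fun_prop
  · exact fun t => ne_of_gt (denom_pos A B hAB _)

lemma key_half (A B : ℝ) (hAB : |B| < A) :
    ∫ t in (0:ℝ)..(1/2), 1 / (A - B * Real.cos (2 * π * t))
      = 1 / (2 * Real.sqrt (A^2 - B^2)) := by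
  have hBA := abs_lt.mp hAB
  have hApB : 0 < A + B := by linarith
  have hAmB : 0 < A - B := by linarith
  have hD : 0 < A ^ 2 - B ^ 2 := by nlinarith
  set D : ℝ := A ^ 2 - B ^ 2 with hDdef
  have hsD : 0 < Real.sqrt D := Real.sqrt_pos.mpr hD
  set k : ℝ := Real.sqrt ((A + B) / (A - B)) with hkdef
  have hk : 0 < k := Real.sqrt_pos.mpr (by positivity)
  have hk2 : k ^ 2 * (A - B) = A + B := by
    rw [hkdef, Real.sq_sqrt (by positivity : (0:ℝ) ≤ (A+B)/(A-B))]
    field_simp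
  have hkD : k * (A - B) = Real.sqrt D := by
    rw [show D = (k * (A - B)) ^ 2 by nlinarith, Real.sqrt_sq (by positivity)]
  set F : ℝ → ℝ := fun t => (1 / (π * Real.sqrt D)) * Real.arctan (k * Real.tan (π * t)) with hF
  have hderiv : ∀ t ∈ Ioo (0:ℝ) (1/2),
      HasDerivAt F (1 / (A - B * Real.cos (2 * π * t))) t := by
    intro t ht
    have hπ : (0:ℝ) < π := Real.pi_pos
    have hπt : π * t ∈ Ioo 0 (π/2) := ⟨mul_pos hπ ht.1, by nlinarith [ht.2]⟩
    have hcospos : 0 < Real.cos (π * t) :=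
      Real.cos_pos_of_mem_Ioo ⟨by linarith [hπt.1], hπt.2⟩
    have hcos : Real.cos (π * t) ≠ 0 := ne_of_gt hcospos
    have h1 : HasDerivAt (fun t : ℝ => π * t) π t := by
      simpa using (hasDerivAt_id t).const_mul π
    have h2 : HasDerivAt (fun t : ℝ => Real.tan (π * t)) ((1 / Real.cos (π*t) ^ 2) * π) t :=
      (Real.hasDerivAt_tan hcos).comp t h1
    have h3 : HasDerivAt (fun t : ℝ => k * Real.tan (π * t)) (k * ((1 / Real.cos (π*t) ^ 2) * π)) t :=
      h2.const_mul k
    have h4 : HasDerivAt (fun t : ℝ => Real.arctan (k * Real.tan (π * t)))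
        ((1 / (1 + (k * Real.tan (π*t)) ^ 2)) * (k * ((1 / Real.cos (π*t) ^ 2) * π))) t :=
      by have := (Real.hasDerivAt_arctan (k * Real.tan (π*t))).comp t h3; exact this
    have h5 := h4.const_mul (1 / (π * Real.sqrt D))
    convert h5 using 1
    case e'_4 => rfl
    case e'_5 => rfl
    set c := Real.cos (π*t)
    set s := Real.sin (π*t)
    have hc2 : c ^ 2 + s ^ 2 = 1 := by rw [add_comm]; exact Real.sin_sq_add_cos_sq _
    have hcos2 : Real.cos (2 * π * t) = c ^ 2 - s ^ 2 := by
      rw [show 2 * π * t = 2 * (π * t) by ring, Real.cos_two_mul]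
      nlinarith [hc2]
    have hden : 0 < A - B * Real.cos (2 * π * t) := denom_pos A B hAB _
    rw [hcos2] at hden ⊢
    have hmain : Real.sqrt D * (c^2 + k^2*s^2) = k * (A - B*(c^2 - s^2)) := by
      linear_combination (-(c^2) - k^2*s^2) * hkD + (k*s^2) * hk2 + (k*A) * hc2
    have h1pos : (0:ℝ) < 1 + (k * Real.tan (π*t))^2 := by positivity
    have hmain' : Real.sqrt (A^2-B^2) * (c^2 + k^2*s^2) = k * (A - B*(c^2 - s^2)) := hmain
    rw [Real.tan_eq_sin_div_cos]
    field_simp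
    change c ^ 2 * √D * (1 + k ^ 2 * s ^ 2 / c ^ 2) = (A - B * (c ^ 2 - s ^ 2)) * k
    have hcc : c ^ 2 * (k ^ 2 * s ^ 2 / c ^ 2) = k ^ 2 * s ^ 2 := by field_simp
    linear_combination hmain + √D * hcc
  have hint : IntervalIntegrable (fun t => 1 / (A - B * Real.cos (2 * π * t))) volume 0 (1/2) :=
    (cont_denom A B hAB).intervalIntegrable _ _
  have ha : Tendsto F (𝓝[>] (0:ℝ)) (𝓝 0) := by
    have : ContinuousAt F 0 := by
      apply ContinuousAt.mul continuousAt_const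
      apply Real.continuous_arctan.continuousAt.comp
      apply ContinuousAt.mul continuousAt_const
      apply (Real.continuousAt_tan.mpr ?_).comp (by fun_prop)
      simp
    have hF0 : F 0 = 0 := by simp [hF]
    have h := this.tendsto
    rw [hF0] at h
    exact h.mono_left nhdsWithin_le_nhds
  have hb : Tendsto F (𝓝[<] (1/2:ℝ)) (𝓝 (1 / (2 * Real.sqrt D))) := by
    have htan : Tendsto (fun t : ℝ => Real.tan (π * t)) (𝓝[<] (1/2:ℝ)) atTop := by
      apply Real.tendsto_tan_pi_div_two.comp
      apply tendsto_nhdsWithin_of_tendsto_nhds_of_eventually_within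
      · have : Tendsto (fun t : ℝ => π * t) (𝓝 (1/2:ℝ)) (𝓝 (π * (1/2))) :=
          (continuous_const.mul continuous_id).tendsto _
        simpa [div_eq_mul_inv] using this.mono_left nhdsWithin_le_nhds
      · filter_upwards [self_mem_nhdsWithin] with x hx
        have hx' : x < 1/2 := hx
        have hπ := Real.pi_pos
        simp only [mem_Iio]
        nlinarith
    have hktan : Tendsto (fun t : ℝ => k * Real.tan (π * t)) (𝓝[<] (1/2:ℝ)) atTop :=
      htan.const_mul_atTop hk
    have harc : Tendsto (fun t : ℝ => Real.arctan (k * Real.tan (π * t))) (𝓝[<] (1/2:ℝ)) (𝓝 (π/2)) :=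
      (tendsto_nhds_of_tendsto_nhdsWithin Real.tendsto_arctan_atTop).comp hktan
    have := harc.const_mul (1 / (π * Real.sqrt D))
    have hπ : (0:ℝ) < π := Real.pi_pos
    convert this using 2
    field_simp
  have := intervalIntegral.integral_eq_sub_of_hasDerivAt_of_tendsto (by norm_num : (0:ℝ) < 1/2)
    hderiv hint ha hb
  rw [this]; ring

lemma key (A B : ℝ) (hAB : |B| < A) :
    ∫ t in (0:ℝ)..1, 1 / (A - B * Real.cos (2 * π * t))
      = 1 / Real.sqrt (A^2 - B^2) := by
  have hint : ∀ a b : ℝ, IntervalIntegrable (fun t => 1 / (A - B * Real.cos (2 * π * t))) volume a b :=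
    fun a b => (cont_denom A B hAB).intervalIntegrable _ _
  have hsplit := intervalIntegral.integral_add_adjacent_intervals (a := (0:ℝ)) (b := 1/2) (c := 1)
    (hint 0 (1/2)) (hint (1/2) 1)
  have hsym : ∫ t in (1/2:ℝ)..1, 1 / (A - B * Real.cos (2 * π * t))
      = ∫ t in (0:ℝ)..(1/2), 1 / (A - B * Real.cos (2 * π * t)) := by
    have h := intervalIntegral.integral_comp_sub_left (a := (0:ℝ)) (b := 1/2)
      (fun t => 1 / (A - B * Real.cos (2 * π * t))) 1
    norm_num at h
    simp only [one_div] at h ⊢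
    rw [← h]
    apply intervalIntegral.integral_congr
    intro x hx
    have : Real.cos (2 * π * (1 - x)) = Real.cos (2 * π * x) := by
      rw [show 2 * π * (1 - x) = 2 * π - 2 * π * x by ring, Real.cos_sub]
      simp [Real.cos_two_pi, Real.sin_two_pi]
    simp [this]
  have hBA := abs_lt.mp hAB
  have hD : 0 < A ^ 2 - B ^ 2 := by nlinarith
  have h0 : Real.sqrt (A^2 - B^2) ≠ 0 := ne_of_gt (Real.sqrt_pos.mpr hD)
  rw [← hsplit, hsym, key_half A B hAB, ← add_div,
    div_eq_div_iff (mul_ne_zero two_ne_zero h0) h0]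
  ring


set_option maxHeartbeats 1000000 in
theorem stmt_18 (β : ℝ) (hβ : 0 < β) :
    2 * ∫ s in (0:ℝ)..1, ∫ t in (0:ℝ)..1,
        (2 - 2 * Real.cos (2 * Real.pi * s)) /
          (16 * β + 12
            - (4 * β + 2) * (2 * Real.cos (2 * Real.pi * t) + 2 * Real.cos (2 * Real.pi * s))
            - 4 * Real.cos (2 * Real.pi * t) * Real.cos (2 * Real.pi * s))
      = Real.arccos (1 / (2 * β + 1)) / (2 * Real.pi * Real.sqrt (β ^ 2 + β)) := by
  have hπ : (0:ℝ) < π := Real.pi_pos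
  set h : ℝ → ℝ := fun s =>
    Real.sin (π*s) / (4 * Real.sqrt ((β+1) * (β+1+β*Real.sin (π*s)^2))) with hh
  have hXpos : ∀ s : ℝ, 0 < (β+1) * (β+1+β*Real.sin (π*s)^2) := by
    intro s
    have := mul_nonneg hβ.le (sq_nonneg (Real.sin (π*s)))
    nlinarith
  -- Step A
  have stepA : ∀ s ∈ Icc (0:ℝ) 1,
      (∫ t in (0:ℝ)..1,
        (2 - 2 * Real.cos (2 * π * s)) /
          (16 * β + 12
            - (4 * β + 2) * (2 * Real.cos (2 * π * t) + 2 * Real.cos (2 * π * s))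
            - 4 * Real.cos (2 * π * t) * Real.cos (2 * π * s))) = h s := by
    intro s hs
    rcases eq_or_lt_of_le hs.1 with h0 | h0
    · have hc0 : Real.cos (2*π*s) = 1 := by rw [← h0]; simp
      have hs0 : Real.sin (π*s) = 0 := by rw [← h0]; simp
      simp only [hh, hc0, hs0]
      norm_num
    rcases eq_or_lt_of_le hs.2 with h1 | h1
    · have hc0 : Real.cos (2*π*s) = 1 := by rw [h1]; simpa using Real.cos_two_pi
      have hs0 : Real.sin (π*s) = 0 := by rw [h1]; simpa using Real.sin_pi
      simp only [hh, hc0, hs0]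
      norm_num
    have hsin : 0 < Real.sin (π*s) :=
      Real.sin_pos_of_pos_of_lt_pi (by positivity) (by nlinarith)
    set si := Real.sin (π*s) with hsi
    have hc : Real.cos (2*π*s) = 1 - 2*si^2 := by
      rw [show 2*π*s = 2*(π*s) by ring, Real.cos_two_mul]
      nlinarith [Real.sin_sq_add_cos_sq (π*s)]
    set c := Real.cos (2*π*s) with hcdef
    set A : ℝ := 16*β+12 - (8*β+4)*c with hA
    set B : ℝ := 8*β+4+4*c with hB
    have hc1 : c < 1 := by rw [hc]; nlinarith
    have hc2 : -1 ≤ c := Real.neg_one_le_cos _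
    have hAB : |B| < A := by
      rw [abs_lt]; constructor <;> (rw [hA, hB]; nlinarith)
    have e1 : (∫ t in (0:ℝ)..1,
        (2 - 2 * Real.cos (2 * π * s)) /
          (16 * β + 12
            - (4 * β + 2) * (2 * Real.cos (2 * π * t) + 2 * Real.cos (2 * π * s))
            - 4 * Real.cos (2 * π * t) * Real.cos (2 * π * s)))
        = ∫ t in (0:ℝ)..1, (2 - 2*c) * (1 / (A - B * Real.cos (2*π*t))) := by
      apply intervalIntegral.integral_congr
      intro t _
      dsimp only
      rw [mul_one_div, ← hcdef]
      congr 1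
      rw [hA, hB]; ring
    rw [e1, intervalIntegral.integral_const_mul, key A B hAB]
    have hsq : A^2 - B^2 = (16*si)^2 * ((β+1) * (β+1+β*si^2)) := by
      rw [hA, hB, hc]; ring
    have hX := hXpos s
    rw [← hsi] at hX
    have hs16 : (0:ℝ) < 16*si := by linarith
    have hsqrt : Real.sqrt (A^2 - B^2)
        = (16*si) * Real.sqrt ((β+1) * (β+1+β*si^2)) := by
      rw [hsq, Real.sqrt_mul (sq_nonneg _), Real.sqrt_sq hs16.le]
    have hsX : 0 < Real.sqrt ((β+1) * (β+1+β*si^2)) := Real.sqrt_pos.mpr hX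
    simp only [hh, ← hsi, ← hcdef]
    rw [hsqrt, hc]
    field_simp
    ring
  have hcongr : (∫ s in (0:ℝ)..1, ∫ t in (0:ℝ)..1,
        (2 - 2 * Real.cos (2 * π * s)) /
          (16 * β + 12
            - (4 * β + 2) * (2 * Real.cos (2 * π * t) + 2 * Real.cos (2 * π * s))
            - 4 * Real.cos (2 * π * t) * Real.cos (2 * π * s)))
      = ∫ s in (0:ℝ)..1, h s := by
    apply intervalIntegral.integral_congr
    rw [uIcc_of_le (by norm_num : (0:ℝ) ≤ 1)]
    exact stepA
  rw [hcongr]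
  -- Step B
  set m : ℝ := Real.sqrt (β / (2*β+1)) with hm
  have hmpos : 0 < m := Real.sqrt_pos.mpr (by positivity)
  have hm2 : m^2 = β / (2*β+1) := Real.sq_sqrt (by positivity)
  have hm2' : m^2*(2*β+1) = β := by rw [hm2]; field_simp
  have hm1 : m < 1 := by nlinarith [hm2', hmpos, sq_nonneg (m-1)]
  have hsβ : (0:ℝ) < Real.sqrt β := Real.sqrt_pos.mpr hβ
  have hsβ1 : (0:ℝ) < Real.sqrt (β+1) := Real.sqrt_pos.mpr (by linarith)
  have hs2β : (0:ℝ) < Real.sqrt (2*β+1) := Real.sqrt_pos.mpr (by linarith)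
  have hsqβ : Real.sqrt (β^2+β) = Real.sqrt β * Real.sqrt (β+1) := by
    rw [show β^2+β = β*(β+1) by ring, Real.sqrt_mul hβ.le]
  have hmval : m = Real.sqrt β / Real.sqrt (2*β+1) := by
    rw [hm, Real.sqrt_div hβ.le]
  set C : ℝ := 1 / (4*π*Real.sqrt (β^2+β)) with hC
  set G : ℝ → ℝ := fun s => -C * Real.arcsin (m * Real.cos (π*s)) with hG
  have hGderiv : ∀ s ∈ uIcc (0:ℝ) 1, HasDerivAt G (h s) s := by
    intro s _
    have hb1 : |m * Real.cos (π*s)| < 1 := by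
      rw [abs_mul, abs_of_pos hmpos]
      calc m * |Real.cos (π*s)| ≤ m * 1 := by
            exact mul_le_mul_of_nonneg_left (Real.abs_cos_le_one _) hmpos.le
        _ < 1 := by linarith
    have hb := abs_lt.mp hb1
    have d1 : HasDerivAt (fun s : ℝ => π * s) π s := by
      simpa using (hasDerivAt_id s).const_mul π
    have d2 : HasDerivAt (fun s : ℝ => Real.cos (π*s)) (-Real.sin (π*s) * π) s :=
      (Real.hasDerivAt_cos (π*s)).comp s d1
    have d3 : HasDerivAt (fun s : ℝ => m * Real.cos (π*s)) (m * (-Real.sin (π*s) * π)) s :=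
      d2.const_mul m
    have d4 : HasDerivAt (fun s : ℝ => Real.arcsin (m * Real.cos (π*s)))
        ((1 / Real.sqrt (1 - (m * Real.cos (π*s))^2)) * (m * (-Real.sin (π*s) * π))) s :=
      by have := (Real.hasDerivAt_arcsin (by linarith : m * Real.cos (π*s) ≠ -1)
        (by linarith : m * Real.cos (π*s) ≠ 1)).comp s d3; exact this
    have d5 := d4.const_mul (-C)
    convert d5 using 1
    case e'_4 => rfl
    case e'_5 => rfl
    -- algebra
    set co := Real.cos (π*s) with hco
    set si := Real.sin (π*s) with hsi2
    have hpy : si^2 + co^2 = 1 := Real.sin_sq_add_cos_sq (π*s)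
    have harg : 1 - (m*co)^2 = (β+1+β*si^2) / (2*β+1) := by
      rw [mul_pow, hm2]
      field_simp
      nlinarith [hpy]
    have hYpos : (0:ℝ) < β+1+β*si^2 := by nlinarith [sq_nonneg si, mul_nonneg hβ.le (sq_nonneg si)]
    have hsY : (0:ℝ) < Real.sqrt (β+1+β*si^2) := Real.sqrt_pos.mpr hYpos
    have e2 : Real.sqrt (1 - (m*co)^2) = Real.sqrt (β+1+β*si^2) / Real.sqrt (2*β+1) := by
      rw [harg, Real.sqrt_div hYpos.le]
    have e3 : Real.sqrt ((β+1) * (β+1+β*si^2)) = Real.sqrt (β+1) * Real.sqrt (β+1+β*si^2) :=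
      Real.sqrt_mul (by linarith) _
    have e4 : Real.sqrt β * Real.sqrt (2*β+1) * m = β := by
      have hb2 : Real.sqrt β * Real.sqrt β = β := Real.mul_self_sqrt hβ.le
      rw [hmval]
      field_simp
      linear_combination hb2
    have hum : Real.sqrt (2*β+1) * m = Real.sqrt β := by
      apply mul_left_cancel₀ hsβ.ne'
      have hb2 : Real.sqrt β * Real.sqrt β = β := Real.mul_self_sqrt hβ.le
      rw [hb2]
      linear_combination e4
    simp only [hh, hC, ← hsi2]
    rw [e2, hsqβ, e3]
    field_simp
    rw [show β*2+1 = 2*β+1 by ring]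
    linear_combination (-si) * hum
  have hcont : Continuous h := by
    rw [hh]
    apply Continuous.div (by fun_prop) (by fun_prop)
    intro s
    have := hXpos s
    have : (0:ℝ) < Real.sqrt ((β+1) * (β+1+β*Real.sin (π*s)^2)) := Real.sqrt_pos.mpr this
    positivity
  have hFTC := intervalIntegral.integral_eq_sub_of_hasDerivAt hGderiv
    (hcont.intervalIntegrable 0 1)
  rw [hFTC]
  -- evaluate G 1 - G 0
  have hG1 : G 1 = C * Real.arcsin m := by
    simp only [hG]
    rw [mul_one, Real.cos_pi]
    rw [show m * (-1) = -m by ring, Real.arcsin_neg]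
    ring
  have hG0 : G 0 = -C * Real.arcsin m := by
    simp only [hG]
    norm_num
  rw [hG1, hG0]
  -- arccos identity
  have harc : Real.arccos (1/(2*β+1)) = 2 * Real.arcsin m := by
    have hcos : Real.cos (2 * Real.arcsin m) = 1/(2*β+1) := by
      rw [Real.cos_two_mul, Real.cos_arcsin, Real.sq_sqrt (by nlinarith [hm2] : (0:ℝ) ≤ 1 - m^2),
        hm2]
      field_simp
      ring
    rw [← hcos, Real.arccos_cos]
    · have := Real.arcsin_nonneg.mpr hmpos.le
      linarith
    · have h1 := Real.arcsin_le_pi_div_two m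
      linarith
  rw [harc, hsqβ]
  have hsqβpos : (0:ℝ) < Real.sqrt β * Real.sqrt (β+1) := by positivity
  rw [hC, hsqβ]
  field_simp
  ring
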